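/- arXiv:2309.00596 — 3 statements merged into one kernel-verified Lean document; each statement's English description precedes it below -/
import Mathlib

section
/- A symmetric bilinear form 𝓡 on Λ²ℝ^n has 2-nonnegative curvature operator in the classical sense (the sum of its two smallest eigenvalues is nonnegative) if and only if 𝓡(ω, ω̄) ≥ 0 for every isotropic ω ∈ Λ²ℂ^n. -/
open scoped BigOperators ComplexOrder
open Complex Matrix

noncomputable section

/-- Wedge product of two vectors, modelled as an antisymmetric matrix. -/
def wedge {n : ℕ} {𝕜 : Type} [CommRing 𝕜] (v w : Fin n → 𝕜) :
    Matrix (Fin n) (Fin n) 𝕜 := fun i j => v i * w j - v j * w i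

/-- Euclidean inner product on ℝ^n. -/
def gR {n : ℕ} (a b : Fin n → ℝ) : ℝ := ∑ i, a i * b i

/-- Complex-bilinear extension of the Euclidean inner product to ℂ^n. -/
def gC {n : ℕ} (v w : Fin n → ℂ) : ℂ := ∑ i, v i * w i

def vecConj {n : ℕ} (v : Fin n → ℂ) : Fin n → ℂ := fun i => (starRingEnd ℂ) (v i)

def vecC {n : ℕ} (a : Fin n → ℝ) : Fin n → ℂ := fun i => (a i : ℂ)

/-- Inner product on Λ²ℝ^n in the matrix model. -/
def IR {n : ℕ} (α β : Matrix (Fin n) (Fin n) ℝ) : ℝ := (1/2) * (∑ i, ∑ j, α i j * β i j)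

/-- Complex-bilinear extension of the inner product to Λ²ℂ^n. -/
def IC {n : ℕ} (ω η : Matrix (Fin n) (Fin n) ℂ) : ℂ := (1/2) * (∑ i, ∑ j, ω i j * η i j)

def matConj {n : ℕ} (ω : Matrix (Fin n) (Fin n) ℂ) : Matrix (Fin n) (Fin n) ℂ :=
  fun i j => (starRingEnd ℂ) (ω i j)

def matRe {n : ℕ} (ω : Matrix (Fin n) (Fin n) ℂ) : Matrix (Fin n) (Fin n) ℝ :=
  fun i j => (ω i j).re

def matIm {n : ℕ} (ω : Matrix (Fin n) (Fin n) ℂ) : Matrix (Fin n) (Fin n) ℝ :=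
  fun i j => (ω i j).im

def matC {n : ℕ} (α : Matrix (Fin n) (Fin n) ℝ) : Matrix (Fin n) (Fin n) ℂ :=
  fun i j => (α i j : ℂ)

/-- Λ²ℝ^n : antisymmetric real matrices. -/
def SkewR (n : ℕ) : Set (Matrix (Fin n) (Fin n) ℝ) := {M | Mᵀ = -M}

/-- Λ²ℂ^n : antisymmetric complex matrices. -/
def SkewC (n : ℕ) : Set (Matrix (Fin n) (Fin n) ℂ) := {M | Mᵀ = -M}

/-- ω is simple: a nonzero wedge of two vectors. -/
def IsSimple {n : ℕ} (ω : Matrix (Fin n) (Fin n) ℂ) : Prop :=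
  ω ≠ 0 ∧ ∃ v w : Fin n → ℂ, ω = wedge v w

/-- The type of (candidate) curvature tensors: bilinear forms on Λ²ℝ^n in the matrix model. -/
abbrev CurvOp (n : ℕ) := Matrix (Fin n) (Fin n) ℝ → Matrix (Fin n) (Fin n) ℝ → ℝ

structure IsSymmBilin {n : ℕ} (R : CurvOp n) : Prop where
  add_left : ∀ α β γ, R (α + β) γ = R α γ + R β γ
  smul_left : ∀ (c : ℝ) (α β), R (c • α) β = c * R α β
  symm : ∀ α β, R α β = R β α

/-- First Bianchi identity. -/
def Bianchi {n : ℕ} (R : CurvOp n) : Prop :=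
  ∀ v w x y : Fin n → ℝ,
    R (wedge v w) (wedge x y) + R (wedge v x) (wedge y w) + R (wedge v y) (wedge w x) = 0

/-- Complex-bilinear extension of a real bilinear form on Λ²ℝ^n to Λ²ℂ^n. -/
def RC {n : ℕ} (R : CurvOp n) (ω η : Matrix (Fin n) (Fin n) ℂ) : ℂ :=
  ((R (matRe ω) (matRe η) - R (matIm ω) (matIm η) : ℝ) : ℂ) +
    Complex.I * ((R (matRe ω) (matIm η) + R (matIm ω) (matRe η) : ℝ) : ℂ)

/-- Standard basis vector of ℝ^n. -/
def stdB (n : ℕ) (j : Fin n) : Fin n → ℝ := fun k => if k = j then 1 else 0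

/-- Ricci curvature of a curvature tensor. -/
def Ric {n : ℕ} (R : CurvOp n) (u : Fin n → ℝ) : ℝ :=
  ∑ j, R (wedge u (stdB n j)) (wedge u (stdB n j))

/-- Scalar curvature. -/
def Scal {n : ℕ} (R : CurvOp n) : ℝ := ∑ i, Ric R (stdB n i)
/-- 2-nonnegativity via eigenvalues: any two eigenvalues of the self-adjoint operator
(w.r.t. the inner product IR on Λ²ℝ^n) admitting orthogonal eigenvectors sum to ≥ 0;
this is the statement that the sum of the two smallest eigenvalues is nonnegative. -/
def TwoNonnegEigen {n : ℕ} (R : CurvOp n) : Prop :=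
  ∀ (lam mu : ℝ) (α β : Matrix (Fin n) (Fin n) ℝ),
    α ∈ SkewR n → β ∈ SkewR n → α ≠ 0 → β ≠ 0 → IR α β = 0 →
    (∀ γ ∈ SkewR n, R α γ = lam * IR α γ) →
    (∀ γ ∈ SkewR n, R β γ = mu * IR β γ) → 0 ≤ lam + mu

namespace Aux

variable {n : ℕ}

lemma IR_comm (α β : Matrix (Fin n) (Fin n) ℝ) : IR α β = IR β α := by
  unfold IR
  congr 1
  exact Finset.sum_congr rfl fun i _ => Finset.sum_congr rfl fun j _ => mul_comm _ _

lemma IR_self_nonneg (α : Matrix (Fin n) (Fin n) ℝ) : 0 ≤ IR α α := by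
  unfold IR
  have h := Finset.sum_nonneg
    (fun i (_ : i ∈ Finset.univ) => Finset.sum_nonneg
      (fun j (_ : j ∈ (Finset.univ : Finset (Fin n))) => mul_self_nonneg (α i j)))
  linarith

lemma eq_zero_of_IR_self {α : Matrix (Fin n) (Fin n) ℝ} (h : IR α α = 0) : α = 0 := by
  unfold IR at h
  have h2 : ∑ i, ∑ j, α i j * α i j = 0 := by linarith
  ext i j
  have hnn : ∀ i ∈ Finset.univ, (0:ℝ) ≤ ∑ j, α i j * α i j :=
    fun i _ => Finset.sum_nonneg fun j _ => mul_self_nonneg _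
  have hi := (Finset.sum_eq_zero_iff_of_nonneg hnn).mp h2 i (Finset.mem_univ i)
  have hij := (Finset.sum_eq_zero_iff_of_nonneg
    (fun j _ => mul_self_nonneg (α i j))).mp hi j (Finset.mem_univ j)
  have := mul_self_eq_zero.mp hij
  simpa using this

lemma IR_smul (a b : ℝ) (α β : Matrix (Fin n) (Fin n) ℝ) :
    IR (a • α) (b • β) = (a * b) * IR α β := by
  unfold IR
  have key : ∀ i j, (a • α) i j * ((b • β) i j) = (a*b) * (α i j * β i j) := by
    intro i j
    simp only [Matrix.smul_apply, smul_eq_mul]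
    ring
  simp_rw [key, ← Finset.mul_sum]
  ring

lemma smul_right {R : CurvOp n} (hR : IsSymmBilin R) (c : ℝ) (α β) :
    R α (c • β) = c * R α β := by
  rw [hR.symm, hR.smul_left, hR.symm]

lemma R_zero_left {R : CurvOp n} (hR : IsSymmBilin R) (β) : R 0 β = 0 := by
  have := hR.smul_left 0 0 β
  simpa using this

lemma matRe_matConj (ω : Matrix (Fin n) (Fin n) ℂ) : matRe (matConj ω) = matRe ω := by
  ext i j; simp [matRe, matConj]

lemma matIm_matConj (ω : Matrix (Fin n) (Fin n) ℂ) : matIm (matConj ω) = -(matIm ω) := by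
  ext i j; simp [matIm, matConj]

lemma RC_conj {R : CurvOp n} (hR : IsSymmBilin R) (ω : Matrix (Fin n) (Fin n) ℂ) :
    RC R ω (matConj ω) = ((R (matRe ω) (matRe ω) + R (matIm ω) (matIm ω) : ℝ) : ℂ) := by
  rw [RC, matRe_matConj, matIm_matConj]
  have h1 : R (matRe ω) (-(matIm ω)) = - R (matRe ω) (matIm ω) := by
    rw [show -(matIm ω) = (-1 : ℝ) • matIm ω by simp, smul_right hR]; ring
  have h2 : R (matIm ω) (-(matIm ω)) = - R (matIm ω) (matIm ω) := by
    rw [show -(matIm ω) = (-1 : ℝ) • matIm ω by simp, smul_right hR]; ring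
  rw [h1, h2, hR.symm (matIm ω) (matRe ω)]
  push_cast
  ring

lemma IC_eq (ω η : Matrix (Fin n) (Fin n) ℂ) :
    IC ω η = (((IR (matRe ω) (matRe η) - IR (matIm ω) (matIm η)) : ℝ) : ℂ) +
      Complex.I * (((IR (matRe ω) (matIm η) + IR (matIm ω) (matRe η)) : ℝ) : ℂ) := by
  unfold IC IR matRe matIm
  rw [Complex.ext_iff]
  constructor <;>
    simp [Complex.mul_re, Complex.mul_im, Complex.re_sum, Complex.im_sum, mul_add, mul_sub,
      Finset.sum_sub_distrib, Finset.sum_add_distrib, Finset.mul_sum]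

end Aux
namespace Aux

open scoped RealInnerProductSpace

variable {n : ℕ}

abbrev ES (n : ℕ) := EuclideanSpace ℝ (Fin n × Fin n)

def toMatL (n : ℕ) : ES n →ₗ[ℝ] Matrix (Fin n) (Fin n) ℝ where
  toFun x := Matrix.of fun i j => x (i, j)
  map_add' x y := by ext i j; simp [PiLp.add_apply]
  map_smul' c x := by ext i j; simp [PiLp.smul_apply]

def toVec (M : Matrix (Fin n) (Fin n) ℝ) : ES n := WithLp.toLp 2 (fun p : Fin n × Fin n => M p.1 p.2)

@[simp] lemma toMat_toVec (M : Matrix (Fin n) (Fin n) ℝ) : toMatL n (toVec M) = M := by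
  ext i j; rfl

lemma toMat_eq_zero {x : ES n} (h : toMatL n x = 0) : x = 0 := by
  ext p
  have := congrFun (congrFun h p.1) p.2
  exact this

lemma inner_eq (x y : ES n) : ⟪x, y⟫ = 2 * IR (toMatL n x) (toMatL n y) := by
  rw [PiLp.inner_apply, Fintype.sum_prod_type]
  unfold IR
  rw [← mul_assoc]
  norm_num
  exact Finset.sum_congr rfl fun i _ => Finset.sum_congr rfl fun j _ => by
    exact mul_comm _ _

def SkewS (n : ℕ) : Submodule ℝ (ES n) where
  carrier := {x | (toMatL n x)ᵀ = -(toMatL n x)}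
  add_mem' := by
    intro x y hx hy
    show (toMatL n (x + y))ᵀ = -(toMatL n (x + y))
    rw [map_add, Matrix.transpose_add, hx, hy]
    abel
  zero_mem' := by
    show (toMatL n 0)ᵀ = -(toMatL n 0)
    simp
  smul_mem' := by
    intro c x hx
    show (toMatL n (c • x))ᵀ = -(toMatL n (c • x))
    rw [_root_.map_smul, Matrix.transpose_smul, hx]
    simp

/-- The self-adjoint operator associated to `R` on the space of skew matrices. -/
def Top (R : CurvOp n) (hR : IsSymmBilin R) : SkewS n →ₗ[ℝ] SkewS n where
  toFun x := ∑ i, (R (toMatL n ↑x) (toMatL n ↑(stdOrthonormalBasis ℝ (SkewS n) i))) •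
    stdOrthonormalBasis ℝ (SkewS n) i
  map_add' x y := by
    simp only [Submodule.coe_add, map_add, hR.add_left, add_smul, Finset.sum_add_distrib]
  map_smul' c x := by
    simp only [Submodule.coe_smul, _root_.map_smul, hR.smul_left, RingHom.id_apply, Finset.smul_sum,
      smul_smul]

lemma R_add_right {R : CurvOp n} (hR : IsSymmBilin R) (α β γ) :
    R α (β + γ) = R α β + R α γ := by
  rw [hR.symm, hR.add_left, hR.symm β α, hR.symm γ α]

lemma R_zero_right {R : CurvOp n} (hR : IsSymmBilin R) (α) : R α 0 = 0 := by
  rw [hR.symm]; exact R_zero_left hR α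

lemma inner_Top {R : CurvOp n} (hR : IsSymmBilin R) (x y : SkewS n) :
    ⟪Top R hR x, y⟫ = R (toMatL n ↑x) (toMatL n ↑y) := by
  set b := stdOrthonormalBasis ℝ (SkewS n)
  have hy : (y : ES n) = ↑(∑ i, ⟪b i, y⟫ • b i) := by rw [b.sum_repr' y]
  calc ⟪Top R hR x, y⟫
      = ∑ i, R (toMatL n ↑x) (toMatL n ↑(b i)) * ⟪b i, y⟫ := by
        rw [Top]
        simp only [LinearMap.coe_mk, AddHom.coe_mk]
        rw [sum_inner]
        exact Finset.sum_congr rfl fun i _ => real_inner_smul_left (b i) y _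
    _ = R (toMatL n ↑x) (toMatL n ↑y) := by
        rw [hy]
        rw [show ((↑(∑ i, ⟪b i, y⟫ • b i) : ES n)) = ∑ i, ⟪b i, y⟫ • (↑(b i) : ES n) by
          push_cast; rfl]
        rw [map_sum]
        have : ∀ i, toMatL n (⟪b i, y⟫ • (↑(b i) : ES n)) = ⟪b i, y⟫ • toMatL n ↑(b i) :=
          fun i => _root_.map_smul _ _ _
        simp_rw [this]
        rw [show R (toMatL n ↑x) (∑ i, ⟪b i, y⟫ • toMatL n ↑(b i))
            = ∑ i, R (toMatL n ↑x) (⟪b i, y⟫ • toMatL n ↑(b i)) by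
          classical
          induction (Finset.univ : Finset (Fin (Module.finrank ℝ (SkewS n)))) using
            Finset.induction_on with
          | empty => simpa using R_zero_right hR _
          | insert _ _ hj ih => rw [Finset.sum_insert hj, Finset.sum_insert hj,
              R_add_right hR, ih]]
        exact Finset.sum_congr rfl fun i _ => by rw [smul_right hR]; ring

lemma Top_isSymm {R : CurvOp n} (hR : IsSymmBilin R) : (Top R hR).IsSymmetric := by
  intro x y
  rw [inner_Top hR, real_inner_comm, inner_Top hR, hR.symm]

end Aux
namespace Aux

open scoped RealInnerProductSpace

set_option maxHeartbeats 1000000 in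
lemma key {n : ℕ} {R : CurvOp n} (hR : IsSymmBilin R) (h2 : TwoNonnegEigen R)
    {α β : Matrix (Fin n) (Fin n) ℝ} (hα : α ∈ SkewR n) (hβ : β ∈ SkewR n)
    (heq : IR α α = IR β β) (hperp : IR α β = 0) :
    0 ≤ R α α + R β β := by
  classical
  by_cases hα0 : α = 0
  · have hββ : IR β β = 0 := by rw [← heq, hα0]; simp [IR]
    have hβ0 : β = 0 := eq_zero_of_IR_self hββ
    subst hα0; subst hβ0
    have h0 := R_zero_left hR (0 : Matrix (Fin n) (Fin n) ℝ)
    rw [h0]; norm_num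
  have hc : 0 < IR α α :=
    lt_of_le_of_ne (IR_self_nonneg α) fun h => hα0 (eq_zero_of_IR_self h.symm)
  set c := IR α α with hcdef
  set s := Real.sqrt (2 * c) with hsdef
  have hs0 : 0 < s := Real.sqrt_pos.mpr (by linarith)
  have hs2 : s * s = 2 * c := Real.mul_self_sqrt (by linarith)
  have hvα : toVec α ∈ SkewS n := by
    show (toMatL n (toVec α))ᵀ = -(toMatL n (toVec α)); rw [toMat_toVec]; exact hα
  have hvβ : toVec β ∈ SkewS n := by
    show (toMatL n (toVec β))ᵀ = -(toMatL n (toVec β)); rw [toMat_toVec]; exact hβ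
  set xS : SkewS n := ⟨s⁻¹ • toVec α, (SkewS n).smul_mem _ hvα⟩ with hxSdef
  set yS : SkewS n := ⟨s⁻¹ • toVec β, (SkewS n).smul_mem _ hvβ⟩ with hySdef
  have hmx : toMatL n ↑xS = s⁻¹ • α := by
    rw [hxSdef]
    show toMatL n (s⁻¹ • toVec α) = s⁻¹ • α
    rw [_root_.map_smul, toMat_toVec]
  have hmy : toMatL n ↑yS = s⁻¹ • β := by
    rw [hySdef]
    show toMatL n (s⁻¹ • toVec β) = s⁻¹ • β
    rw [_root_.map_smul, toMat_toVec]
  have hinv : (2 * c) * (s⁻¹ * s⁻¹) = 1 := by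
    rw [← hs2]; field_simp
  have hxx : ⟪xS, xS⟫ = 1 := by
    rw [Submodule.coe_inner, inner_eq, hmx, IR_smul]
    linear_combination hinv
  have hyy : ⟪yS, yS⟫ = 1 := by
    rw [Submodule.coe_inner, inner_eq, hmy, IR_smul, ← heq]
    linear_combination hinv
  have hxy : ⟪xS, yS⟫ = 0 := by
    rw [Submodule.coe_inner, inner_eq, hmx, hmy, IR_smul, hperp]; ring
  have hyx : ⟪yS, xS⟫ = 0 := by rw [real_inner_comm]; exact hxy
  set f : Fin 2 → SkewS n := ![xS, yS] with hfdef
  have horm : Orthonormal ℝ f := by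
    rw [orthonormal_iff_ite]
    intro i j
    fin_cases i <;> fin_cases j <;>
      simp [hfdef, hxx, hyy, hxy, hyx, -inner_self_eq_norm_sq_to_K]
  set T := Top R hR with hTdef
  have hsym := Top_isSymm hR
  set N := Module.finrank ℝ (SkewS n) with hNdef
  have hNrank : Module.finrank ℝ (SkewS n) = N := rfl
  set u := hsym.eigenvectorBasis hNrank with hudef
  set lamE := hsym.eigenvalues hNrank with hlamdef
  have heig : ∀ k, T (u k) = lamE k • u k := fun k => by
    exact_mod_cast hsym.apply_eigenvectorBasis hNrank k
  have hN2 : 2 ≤ N := by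
    have hli := horm.linearIndependent
    have := hli.fintype_card_le_finrank
    simpa using this
  have transfer : ∀ k, ∀ γ ∈ SkewR n,
      R (toMatL n ↑(u k)) γ = (2 * lamE k) * IR (toMatL n ↑(u k)) γ := by
    intro k γ hγ
    have hγS : toVec γ ∈ SkewS n := by
      show (toMatL n (toVec γ))ᵀ = -(toMatL n (toVec γ)); rw [toMat_toVec]; exact hγ
    have h1 : R (toMatL n ↑(u k)) γ = ⟪T (u k), (⟨toVec γ, hγS⟩ : SkewS n)⟫ := by
      rw [hTdef, inner_Top hR]
      rw [show ((⟨toVec γ, hγS⟩ : SkewS n) : ES n) = toVec γ from rfl, toMat_toVec]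
    rw [h1, heig k, real_inner_smul_left (u k) (⟨toVec γ, hγS⟩ : SkewS n) (lamE k), Submodule.coe_inner, inner_eq]
    rw [show ((⟨toVec γ, hγS⟩ : SkewS n) : ES n) = toVec γ from rfl, toMat_toVec]
    ring
  have hpair : ∀ k l, k ≠ l → 0 ≤ lamE k + lamE l := by
    intro k l hkl
    have hk0 : toMatL n ↑(u k) ≠ 0 := fun h =>
      (u.orthonormal.ne_zero k) (ZeroMemClass.coe_eq_zero.mp (toMat_eq_zero h))
    have hl0 : toMatL n ↑(u l) ≠ 0 := fun h =>
      (u.orthonormal.ne_zero l) (ZeroMemClass.coe_eq_zero.mp (toMat_eq_zero h))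
    have hIR0 : IR (toMatL n ↑(u k)) (toMatL n ↑(u l)) = 0 := by
      have h0 : inner ℝ (u k) (u l) = (0:ℝ) := u.orthonormal.2 hkl
      rw [Submodule.coe_inner, inner_eq] at h0
      linarith
    have := h2 (2 * lamE k) (2 * lamE l) (toMatL n ↑(u k)) (toMatL n ↑(u l))
      (u k).2 (u l).2 hk0 hl0 hIR0 (transfer k) (transfer l)
    linarith
  have hN0 : (Finset.univ : Finset (Fin N)).Nonempty := by
    have hpos : 0 < N := by omega
    exact ⟨⟨0, hpos⟩, Finset.mem_univ _⟩
  obtain ⟨i0, -, hi0⟩ := Finset.exists_min_image Finset.univ lamE hN0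
  have hNe : (Finset.univ.erase i0).Nonempty := by
    rw [← Finset.card_pos, Finset.card_erase_of_mem (Finset.mem_univ _), Finset.card_univ]
    simp only [Fintype.card_fin]
    omega
  obtain ⟨j0, hj0mem, hj0⟩ := Finset.exists_min_image _ lamE hNe
  have hij0 : j0 ≠ i0 := Finset.ne_of_mem_erase hj0mem
  have h60 : 0 ≤ lamE i0 + lamE j0 := hpair i0 j0 hij0.symm
  have hTx : ⟪T xS, xS⟫ = ∑ k, lamE k * ⟪u k, xS⟫ ^ 2 := by
    rw [← u.sum_inner_mul_inner (T xS) xS]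
    refine Finset.sum_congr rfl fun k _ => ?_
    have hk : ⟪T xS, u k⟫ = lamE k * ⟪u k, xS⟫ := by
      rw [hsym xS (u k), heig k, real_inner_smul_right xS (u k) (lamE k), real_inner_comm]
    rw [hk]; ring
  have hTy : ⟪T yS, yS⟫ = ∑ k, lamE k * ⟪u k, yS⟫ ^ 2 := by
    rw [← u.sum_inner_mul_inner (T yS) yS]
    refine Finset.sum_congr rfl fun k _ => ?_
    have hk : ⟪T yS, u k⟫ = lamE k * ⟪u k, yS⟫ := by
      rw [hsym yS (u k), heig k, real_inner_smul_right yS (u k) (lamE k), real_inner_comm]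
    rw [hk]; ring
  have hPx : ∑ k, ⟪u k, xS⟫ ^ 2 = 1 := by
    have h0 := u.sum_inner_mul_inner xS xS
    rw [hxx] at h0
    rw [← h0]
    exact Finset.sum_congr rfl fun k _ => by rw [real_inner_comm xS (u k)]; ring
  have hPy : ∑ k, ⟪u k, yS⟫ ^ 2 = 1 := by
    have h0 := u.sum_inner_mul_inner yS yS
    rw [hyy] at h0
    rw [← h0]
    exact Finset.sum_congr rfl fun k _ => by rw [real_inner_comm yS (u k)]; ring
  have hBess : ∀ k, ⟪u k, xS⟫ ^ 2 + ⟪u k, yS⟫ ^ 2 ≤ 1 := by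
    intro k
    have hb := horm.sum_inner_products_le (s := Finset.univ) ((u k : SkewS n))
    rw [Fin.sum_univ_two] at hb
    have e0 : f 0 = xS := rfl
    have e1 : f 1 = yS := rfl
    have h1 : ‖u k‖ = 1 := u.orthonormal.1 k
    rw [e0, e1, h1] at hb
    have c1 : ⟪xS, u k⟫ = ⟪u k, xS⟫ := real_inner_comm _ _
    have c2 : ⟪yS, u k⟫ = ⟪u k, yS⟫ := real_inner_comm _ _
    rw [Real.norm_eq_abs, Real.norm_eq_abs, _root_.sq_abs, _root_.sq_abs, c1, c2] at hb
    simpa using hb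
  have hmain : 0 ≤ ⟪T xS, xS⟫ + ⟪T yS, yS⟫ := by
    have hsum : ⟪T xS, xS⟫ + ⟪T yS, yS⟫
        = ∑ k, lamE k * (⟪u k, xS⟫ ^ 2 + ⟪u k, yS⟫ ^ 2) := by
      rw [hTx, hTy, ← Finset.sum_add_distrib]
      exact Finset.sum_congr rfl fun k _ => by ring
    have hts : ∑ k, (⟪u k, xS⟫ ^ 2 + ⟪u k, yS⟫ ^ 2) = 2 := by
      rw [Finset.sum_add_distrib, hPx, hPy]; norm_num
    have he1 : ∑ k ∈ Finset.univ.erase i0, (⟪u k, xS⟫ ^ 2 + ⟪u k, yS⟫ ^ 2)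
        = 2 - (⟪u i0, xS⟫ ^ 2 + ⟪u i0, yS⟫ ^ 2) := by
      rw [Finset.sum_erase_eq_sub (Finset.mem_univ i0), hts]
    have he2 : lamE j0 * (2 - (⟪u i0, xS⟫ ^ 2 + ⟪u i0, yS⟫ ^ 2))
        ≤ ∑ k ∈ Finset.univ.erase i0, lamE k * (⟪u k, xS⟫ ^ 2 + ⟪u k, yS⟫ ^ 2) := by
      rw [← he1, Finset.mul_sum]
      refine Finset.sum_le_sum fun k hk => ?_
      exact mul_le_mul_of_nonneg_right (hj0 k hk) (by positivity)
    have he3 : ∑ k, lamE k * (⟪u k, xS⟫ ^ 2 + ⟪u k, yS⟫ ^ 2)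
        = lamE i0 * (⟪u i0, xS⟫ ^ 2 + ⟪u i0, yS⟫ ^ 2)
          + ∑ k ∈ Finset.univ.erase i0, lamE k * (⟪u k, xS⟫ ^ 2 + ⟪u k, yS⟫ ^ 2) :=
      (Finset.add_sum_erase _ _ (Finset.mem_univ i0)).symm
    have hle : lamE i0 ≤ lamE j0 := hi0 j0 (Finset.mem_univ j0)
    have hB := hBess i0
    have ht0 : 0 ≤ ⟪u i0, xS⟫ ^ 2 + ⟪u i0, yS⟫ ^ 2 := by positivity
    rw [hsum, he3]
    nlinarith [he2, h60, hle, hB, ht0]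
  have hRx : R α α = (2 * c) * ⟪T xS, xS⟫ := by
    rw [hTdef, inner_Top hR, hmx, hR.smul_left, smul_right hR]
    linear_combination (-(R α α)) * hinv
  have hRy : R β β = (2 * c) * ⟪T yS, yS⟫ := by
    rw [hTdef, inner_Top hR, hmy, hR.smul_left, smul_right hR]
    linear_combination (-(R β β)) * hinv
  rw [hRx, hRy]
  nlinarith [hc, hmain]

end Aux
namespace Aux

variable {n : ℕ}

lemma skew_entry {ω : Matrix (Fin n) (Fin n) ℂ} (hω : ω ∈ SkewC n) (i j : Fin n) :
    ω j i = - ω i j := by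
  have := congrFun (congrFun (hω : ωᵀ = -ω) i) j
  simpa [Matrix.transpose_apply, Matrix.neg_apply] using this

lemma skew_re {ω : Matrix (Fin n) (Fin n) ℂ} (hω : ω ∈ SkewC n) :
    (matRe ω) ∈ SkewR n := by
  show (matRe ω)ᵀ = -(matRe ω)
  ext i j
  simp [Matrix.transpose_apply, Matrix.neg_apply, matRe, skew_entry hω i j]

lemma skew_im {ω : Matrix (Fin n) (Fin n) ℂ} (hω : ω ∈ SkewC n) :
    (matIm ω) ∈ SkewR n := by
  show (matIm ω)ᵀ = -(matIm ω)
  ext i j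
  simp [Matrix.transpose_apply, Matrix.neg_apply, matIm, skew_entry hω i j]

lemma iso_parts {ω : Matrix (Fin n) (Fin n) ℂ} (h : IC ω ω = 0) :
    IR (matRe ω) (matRe ω) = IR (matIm ω) (matIm ω) ∧ IR (matRe ω) (matIm ω) = 0 := by
  rw [IC_eq] at h
  have hre := congrArg Complex.re h
  have him := congrArg Complex.im h
  simp at hre him
  have h2 : IR (matIm ω) (matRe ω) = IR (matRe ω) (matIm ω) := IR_comm _ _
  constructor
  · linarith
  · linarith

end Aux

theorem stmt_6 (n : ℕ) (R : CurvOp n) (hR : IsSymmBilin R) :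
    TwoNonnegEigen R ↔
      ∀ ω : Matrix (Fin n) (Fin n) ℂ, ω ∈ SkewC n → IC ω ω = 0 →
        0 ≤ RC R ω (matConj ω) := by
  constructor
  · intro h2 ω hω hiso
    obtain ⟨heq, hperp⟩ := Aux.iso_parts hiso
    rw [Aux.RC_conj hR, Complex.zero_le_real]
    exact Aux.key hR h2 (Aux.skew_re hω) (Aux.skew_im hω) heq hperp
  · intro hpos lam mu α β hα hβ hα0 hβ0 hperp heigα heigβ
    have hααnn : 0 ≤ IR α α := Aux.IR_self_nonneg α
    have hββnn : 0 ≤ IR β β := Aux.IR_self_nonneg β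
    set a := Real.sqrt (IR β β) with ha
    set b := Real.sqrt (IR α α) with hb
    have ha2 : a * a = IR β β := Real.mul_self_sqrt hββnn
    have hb2 : b * b = IR α α := Real.mul_self_sqrt hααnn
    set ω : Matrix (Fin n) (Fin n) ℂ :=
      fun i j => (((a • α) i j : ℝ) : ℂ) + (((b • β) i j : ℝ) : ℂ) * Complex.I with hωdef
    have hre : matRe ω = a • α := by ext i j; simp [matRe, hωdef]
    have him : matIm ω = b • β := by ext i j; simp [matIm, hωdef]
    have hskew : ω ∈ SkewC n := by
      show ωᵀ = -ω
      ext i j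
      have h1 : α j i = -α i j := by
        have := congrFun (congrFun (hα : αᵀ = -α) i) j
        simpa [Matrix.transpose_apply, Matrix.neg_apply] using this
      have h1' : β j i = -β i j := by
        have := congrFun (congrFun (hβ : βᵀ = -β) i) j
        simpa [Matrix.transpose_apply, Matrix.neg_apply] using this
      show ω j i = -ω i j
      simp [Matrix.transpose_apply, Matrix.neg_apply, hωdef, Matrix.smul_apply, h1, h1']
      ring
    have hiso : IC ω ω = 0 := by
      rw [Aux.IC_eq, hre, him, Aux.IR_smul, Aux.IR_smul, Aux.IR_smul, Aux.IR_smul,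
        Aux.IR_comm β α]
      have hx : a * a * IR α α - b * b * IR β β = 0 := by rw [ha2, hb2]; ring
      have hy : a * b * IR α β + b * a * IR α β = 0 := by rw [hperp]; ring
      rw [hx, hy]
      simp
    have hkey := hpos ω hskew hiso
    rw [Aux.RC_conj hR, hre, him] at hkey
    have e1 : R (a • α) (a • α) = (a * a) * (lam * IR α α) := by
      rw [hR.smul_left, Aux.smul_right hR, heigα α hα]; ring
    have e2 : R (b • β) (b • β) = (b * b) * (mu * IR β β) := by
      rw [hR.smul_left, Aux.smul_right hR, heigβ β hβ]; ring
    rw [e1, e2, Complex.zero_le_real] at hkey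
    have hIRα : 0 < IR α α :=
      lt_of_le_of_ne hααnn fun h => hα0 (Aux.eq_zero_of_IR_self h.symm)
    have hIRβ : 0 < IR β β :=
      lt_of_le_of_ne hββnn fun h => hβ0 (Aux.eq_zero_of_IR_self h.symm)
    rw [ha2, hb2] at hkey
    nlinarith [mul_pos hIRα hIRβ, hkey]
end
end

section
/- Let 𝓡 be an algebraic curvature tensor on ℝ^n (n ≥ 3) and let a₁, …, a_n be an orthonormal basis of ℝ^n. Setting ω_{jk} := a₁ ∧ (a_j + i a_k) ∈ Λ²ℂ^n for 1 < j < k ≤ n, one has Ric(𝓡)(a₁, a₁) = (1/(n−2)) · Σ_{1<j<k≤n} 𝓡(ω_{jk}, ω̄_{jk}). -/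
open scoped BigOperators ComplexOrder
open Complex Matrix

noncomputable section

set_option maxRecDepth 8000

section Aux

variable {n : ℕ} {R : CurvOp n}

lemma R_zero_left (hR : IsSymmBilin R) (β : Matrix (Fin n) (Fin n) ℝ) : R 0 β = 0 := by
  have h := hR.smul_left 0 0 β
  simpa using h

lemma R_sum_left (hR : IsSymmBilin R) {ι : Type} (s : Finset ι)
    (g : ι → Matrix (Fin n) (Fin n) ℝ) (β : Matrix (Fin n) (Fin n) ℝ) :
    R (∑ i ∈ s, g i) β = ∑ i ∈ s, R (g i) β := by
  classical
  induction s using Finset.cons_induction with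
  | empty => simpa using R_zero_left hR β
  | cons x s hx ih => rw [Finset.sum_cons, hR.add_left, ih, Finset.sum_cons]

lemma R_sum_right (hR : IsSymmBilin R) {ι : Type} (s : Finset ι)
    (g : ι → Matrix (Fin n) (Fin n) ℝ) (β : Matrix (Fin n) (Fin n) ℝ) :
    R β (∑ i ∈ s, g i) = ∑ i ∈ s, R β (g i) := by
  rw [hR.symm, R_sum_left hR]
  exact Finset.sum_congr rfl fun i _ => hR.symm _ _

lemma R_smul_right (hR : IsSymmBilin R) (c : ℝ) (α β : Matrix (Fin n) (Fin n) ℝ) :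
    R α (c • β) = c * R α β := by
  rw [hR.symm, hR.smul_left, hR.symm]

lemma R_neg_right (hR : IsSymmBilin R) (α β : Matrix (Fin n) (Fin n) ℝ) :
    R α (-β) = - R α β := by
  have h : -β = (-1 : ℝ) • β := by simp
  rw [h, R_smul_right hR]; ring

lemma wedge_self (v : Fin n → ℝ) : wedge v v = 0 := by
  funext i j
  simp [wedge, mul_comm]

lemma matRe_matConj (ω : Matrix (Fin n) (Fin n) ℂ) : matRe (matConj ω) = matRe ω := by
  funext i j; simp [matRe, matConj]

lemma matIm_matConj (ω : Matrix (Fin n) (Fin n) ℂ) : matIm (matConj ω) = - matIm ω := by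
  funext i j; simp [matIm, matConj]

lemma matRe_omega (u v w : Fin n → ℝ) :
    matRe (wedge (vecC u) (fun i => (v i : ℂ) + Complex.I * (w i : ℂ))) = wedge u v := by
  funext i j
  simp [matRe, wedge, vecC]

lemma matIm_omega (u v w : Fin n → ℝ) :
    matIm (wedge (vecC u) (fun i => (v i : ℂ) + Complex.I * (w i : ℂ))) = wedge u w := by
  funext i j
  simp [matIm, wedge, vecC]

lemma term_eq (hR : IsSymmBilin R) (u v w : Fin n → ℝ) :
    RC R (wedge (vecC u) (fun i => (v i : ℂ) + Complex.I * (w i : ℂ)))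
      (matConj (wedge (vecC u) (fun i => (v i : ℂ) + Complex.I * (w i : ℂ)))) =
      ((R (wedge u v) (wedge u v) + R (wedge u w) (wedge u w) : ℝ) : ℂ) := by
  unfold RC
  rw [matRe_matConj, matIm_matConj, matRe_omega, matIm_omega, R_neg_right hR,
    R_neg_right hR, hR.symm (wedge u w) (wedge u v)]
  push_cast
  ring

lemma wedge_expand (u b : Fin n → ℝ) :
    wedge u b = ∑ k : Fin n, b k • wedge u (stdB n k) := by
  funext i j
  simp only [Finset.sum_apply, Matrix.sum_apply, Matrix.smul_apply, wedge, stdB,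
    smul_eq_mul, mul_ite, mul_one, mul_zero, mul_sub, Finset.sum_sub_distrib]
  simp [Finset.sum_ite_eq', mul_comm]

lemma ric_basis (hR : IsSymmBilin R) (a : Fin n → Fin n → ℝ)
    (ha : ∀ i j, gR (a i) (a j) = if i = j then 1 else 0) (u : Fin n → ℝ) :
    ∑ j : Fin n, R (wedge u (a j)) (wedge u (a j)) = Ric R u := by
  classical
  have horth : ∀ k l : Fin n, (∑ j : Fin n, a j k * a j l) = if k = l then 1 else 0 := by
    intro k l
    set A : Matrix (Fin n) (Fin n) ℝ := Matrix.of a with hAdef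
    have hA : A * Aᵀ = 1 := by
      ext i j
      have h := ha i j
      simpa [Matrix.mul_apply, gR, Matrix.one_apply, hAdef] using h
    have hA' : Aᵀ * A = 1 := mul_eq_one_comm.mp hA
    have h2 := congrFun (congrFun hA' k) l
    simpa [Matrix.mul_apply, Matrix.one_apply, hAdef] using h2
  calc ∑ j : Fin n, R (wedge u (a j)) (wedge u (a j))
      = ∑ j : Fin n, ∑ k : Fin n, ∑ l : Fin n,
          a j k * a j l * R (wedge u (stdB n k)) (wedge u (stdB n l)) := by
        refine Finset.sum_congr rfl fun j _ => ?_
        rw [wedge_expand u (a j), R_sum_left hR]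
        refine Finset.sum_congr rfl fun k _ => ?_
        rw [hR.smul_left, R_sum_right hR, Finset.mul_sum]
        refine Finset.sum_congr rfl fun l _ => ?_
        rw [R_smul_right hR]
        ring
    _ = ∑ k : Fin n, ∑ l : Fin n,
          (∑ j : Fin n, a j k * a j l) * R (wedge u (stdB n k)) (wedge u (stdB n l)) := by
        rw [Finset.sum_comm]
        refine Finset.sum_congr rfl fun k _ => ?_
        rw [Finset.sum_comm]
        refine Finset.sum_congr rfl fun l _ => ?_
        rw [Finset.sum_mul]
    _ = Ric R u := by
        simp only [horth, ite_mul, one_mul, zero_mul]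
        rw [Ric]
        refine Finset.sum_congr rfl fun k _ => ?_
        simp [Finset.sum_ite_eq]

lemma count_sum (hn : 3 ≤ n) (f : Fin n → ℝ) (hf0 : ∀ j : Fin n, (j : ℕ) = 0 → f j = 0) :
    ∑ j : Fin n, ∑ k : Fin n, (if 0 < (j : ℕ) ∧ (j : ℕ) < (k : ℕ) then f j + f k else 0)
      = ((n : ℝ) - 2) * ∑ j : Fin n, f j := by
  classical
  have split : ∀ j k : Fin n,
      (if 0 < (j : ℕ) ∧ (j : ℕ) < (k : ℕ) then f j + f k else 0)
        = (if 0 < (j : ℕ) ∧ (j : ℕ) < (k : ℕ) then f j else 0)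
          + (if 0 < (j : ℕ) ∧ (j : ℕ) < (k : ℕ) then f k else 0) := by
    intro j k; split <;> simp
  simp only [split, Finset.sum_add_distrib]
  have hS1 : ∀ j : Fin n,
      (∑ k : Fin n, if 0 < (j : ℕ) ∧ (j : ℕ) < (k : ℕ) then f j else 0)
        = ((n - 1 - (j : ℕ) : ℕ) : ℝ) * f j := by
    intro j
    by_cases h0 : 0 < (j : ℕ)
    · have hfil : Finset.univ.filter (fun k : Fin n => 0 < (j : ℕ) ∧ (j : ℕ) < (k : ℕ))
          = Finset.Ioi j := by
        ext k
        simp only [Finset.mem_filter, Finset.mem_univ, true_and, Finset.mem_Ioi, Fin.lt_def]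
        exact ⟨fun h => h.2, fun h => ⟨h0, h⟩⟩
      rw [← Finset.sum_filter, hfil, Finset.sum_const, Fin.card_Ioi, nsmul_eq_mul]
    · have hj : f j = 0 := hf0 j (by omega)
      simp [h0, hj]
  have hS2 : ∀ k : Fin n,
      (∑ j : Fin n, if 0 < (j : ℕ) ∧ (j : ℕ) < (k : ℕ) then f k else 0)
        = (((k : ℕ) - 1 : ℕ) : ℝ) * f k := by
    intro k
    have hfil : Finset.univ.filter (fun j : Fin n => 0 < (j : ℕ) ∧ (j : ℕ) < (k : ℕ))
        = Finset.Ioo (⟨0, by omega⟩ : Fin n) k := by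
      ext j
      simp only [Finset.mem_filter, Finset.mem_univ, true_and, Finset.mem_Ioo, Fin.lt_def]
    rw [← Finset.sum_filter, hfil, Finset.sum_const, Fin.card_Ioo, nsmul_eq_mul]
    norm_num
  have hswap : (∑ j : Fin n, ∑ k : Fin n, if 0 < (j : ℕ) ∧ (j : ℕ) < (k : ℕ) then f k else 0)
      = ∑ k : Fin n, ∑ j : Fin n, if 0 < (j : ℕ) ∧ (j : ℕ) < (k : ℕ) then f k else 0 :=
    Finset.sum_comm
  rw [hswap]
  simp only [hS1, hS2]
  rw [← Finset.sum_add_distrib, Finset.mul_sum]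
  refine Finset.sum_congr rfl fun j _ => ?_
  by_cases h0 : (j : ℕ) = 0
  · simp [hf0 j h0]
  · have h1 : 1 ≤ (j : ℕ) := by omega
    have h2 : (j : ℕ) < n := j.isLt
    have hcoef : ((n - 1 - (j : ℕ) : ℕ) : ℝ) + (((j : ℕ) - 1 : ℕ) : ℝ) = (n : ℝ) - 2 := by
      rw [← Nat.cast_add]
      have hnat : (n - 1 - (j : ℕ)) + ((j : ℕ) - 1) = n - 2 := by omega
      rw [hnat, Nat.cast_sub (by omega : 2 ≤ n)]
      norm_num
    rw [← add_mul, hcoef]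

end Aux

theorem stmt_7 (n : ℕ) (hn : 3 ≤ n) (R : CurvOp n) (hR : IsSymmBilin R) (hB : Bianchi R)
    (a : Fin n → Fin n → ℝ)
    (ha : ∀ i j, gR (a i) (a j) = if i = j then 1 else 0) :
    ((Ric R (a ⟨0, by omega⟩) : ℝ) : ℂ) =
      (1 / ((n : ℂ) - 2)) *
        ∑ j : Fin n, ∑ k : Fin n,
          if 0 < (j : ℕ) ∧ (j : ℕ) < (k : ℕ) then
            RC R (wedge (vecC (a ⟨0, by omega⟩))
                (fun i => (a j i : ℂ) + Complex.I * (a k i : ℂ)))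
              (matConj (wedge (vecC (a ⟨0, by omega⟩))
                (fun i => (a j i : ℂ) + Complex.I * (a k i : ℂ))))
          else 0 := by
  classical
  set a0 : Fin n → ℝ := a ⟨0, by omega⟩ with ha0
  set f : Fin n → ℝ := fun m => R (wedge a0 (a m)) (wedge a0 (a m)) with hfdef
  have hf0 : ∀ j : Fin n, (j : ℕ) = 0 → f j = 0 := by
    intro j hj
    have hje : j = ⟨0, by omega⟩ := by
      apply Fin.ext; simpa using hj
    have : f j = R (wedge a0 a0) (wedge a0 a0) := by rw [hfdef]; simp only; rw [hje]
    rw [this, wedge_self]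
    exact R_zero_left hR _
  have hterm : ∀ j k : Fin n,
      (if 0 < (j : ℕ) ∧ (j : ℕ) < (k : ℕ) then
          RC R (wedge (vecC (a ⟨0, by omega⟩))
              (fun i => (a j i : ℂ) + Complex.I * (a k i : ℂ)))
            (matConj (wedge (vecC (a ⟨0, by omega⟩))
              (fun i => (a j i : ℂ) + Complex.I * (a k i : ℂ))))
        else 0)
        = (((if 0 < (j : ℕ) ∧ (j : ℕ) < (k : ℕ) then f j + f k else 0 : ℝ)) : ℂ) := by
    intro j k
    split
    · exact term_eq hR a0 (a j) (a k)
    · simp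
  have hreal : ∑ j : Fin n, ∑ k : Fin n,
      (if 0 < (j : ℕ) ∧ (j : ℕ) < (k : ℕ) then f j + f k else 0)
        = ((n : ℝ) - 2) * Ric R a0 := by
    rw [count_sum hn f hf0, ric_basis hR a ha]
  have hn2 : ((n : ℂ) - 2) ≠ 0 := by
    intro h
    have h2 : (n : ℂ) = ((2 : ℕ) : ℂ) := by push_cast; linear_combination h
    have := Nat.cast_inj.mp h2
    omega
  calc ((Ric R (a ⟨0, by omega⟩) : ℝ) : ℂ)
      = (1 / ((n : ℂ) - 2)) * ((((n : ℝ) - 2) * Ric R a0 : ℝ) : ℂ) := by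
        push_cast
        field_simp
        rfl
    _ = (1 / ((n : ℂ) - 2)) *
        ∑ j : Fin n, ∑ k : Fin n,
          if 0 < (j : ℕ) ∧ (j : ℕ) < (k : ℕ) then
            RC R (wedge (vecC (a ⟨0, by omega⟩))
                (fun i => (a j i : ℂ) + Complex.I * (a k i : ℂ)))
              (matConj (wedge (vecC (a ⟨0, by omega⟩))
                (fun i => (a j i : ℂ) + Complex.I * (a k i : ℂ))))
          else 0 := by
        congr 1
        have hconv : (∑ j : Fin n, ∑ k : Fin n,
            if 0 < (j : ℕ) ∧ (j : ℕ) < (k : ℕ) then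
              RC R (wedge (vecC (a ⟨0, by omega⟩))
                  (fun i => (a j i : ℂ) + Complex.I * (a k i : ℂ)))
                (matConj (wedge (vecC (a ⟨0, by omega⟩))
                  (fun i => (a j i : ℂ) + Complex.I * (a k i : ℂ))))
            else 0)
            = ∑ j : Fin n, ∑ k : Fin n,
              (((if 0 < (j : ℕ) ∧ (j : ℕ) < (k : ℕ) then f j + f k else 0 : ℝ)) : ℂ) :=
          Finset.sum_congr rfl fun j _ => Finset.sum_congr rfl fun k _ => hterm j k
        rw [hconv, ← hreal]
        norm_cast
end
end

section
/- In dimension n = 3, an algebraic curvature tensor is weakly PIC1 (𝓡(ω, ω̄) ≥ 0 for every simple isotropic ω ∈ Λ²ℂ³) if and only if it has nonnegative Ricci curvature. -/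
open scoped BigOperators ComplexOrder
open Complex Matrix

noncomputable section

-- my helpers
def crossR (a b : Fin 3 → ℝ) : Fin 3 → ℝ :=
  ![a 1 * b 2 - a 2 * b 1, a 2 * b 0 - a 0 * b 2, a 0 * b 1 - a 1 * b 0]
def crossC (a b : Fin 3 → ℂ) : Fin 3 → ℂ :=
  ![a 1 * b 2 - a 2 * b 1, a 2 * b 0 - a 0 * b 2, a 0 * b 1 - a 1 * b 0]
def EE (x : Fin 3 → ℝ) : Matrix (Fin 3) (Fin 3) ℝ :=
  ![![0, x 2, -x 1], ![-x 2, 0, x 0], ![x 1, -x 0, 0]]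
def EEC (x : Fin 3 → ℂ) : Matrix (Fin 3) (Fin 3) ℂ :=
  ![![0, x 2, -x 1], ![-x 2, 0, x 0], ![x 1, -x 0, 0]]

lemma wedge_eq_EEC (v w : Fin 3 → ℂ) : wedge v w = EEC (crossC v w) := by
  funext i j
  fin_cases i <;> fin_cases j <;> simp [wedge, EEC, crossC] <;> ring

lemma IC_wedge (v w : Fin 3 → ℂ) :
    IC (wedge v w) (wedge v w) = gC (crossC v w) (crossC v w) := by
  simp [IC, wedge, gC, crossC, Fin.sum_univ_three]
  ring

section Bilin
variable {R : CurvOp 3}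

lemma smul_right' (hR : IsSymmBilin R) (c : ℝ) (α β) : R α (c • β) = c * R α β := by
  rw [hR.symm, hR.smul_left, hR.symm]

lemma add_right' (hR : IsSymmBilin R) (α β γ) : R α (β + γ) = R α β + R α γ := by
  rw [hR.symm, hR.add_left, hR.symm β α, hR.symm γ α]

lemma zero_left' (hR : IsSymmBilin R) (γ) : R 0 γ = 0 := by
  have := hR.smul_left 0 0 γ
  simpa using this

lemma expand_quad (hR : IsSymmBilin R) (x y : ℝ) (α β) :
    R (x • α + y • β) (x • α + y • β)
      = x^2 * R α α + 2*x*y* R α β + y^2 * R β β := by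
  have h1 : ∀ (c d : ℝ) γ δ, R (c • γ) (d • δ) = c * d * R γ δ := by
    intro c d γ δ; rw [hR.smul_left, smul_right' hR]; ring
  rw [hR.add_left, add_right' hR, add_right' hR, h1, h1, h1, h1, hR.symm β α]
  ring

end Bilin

lemma wedge_cross_stdB (a b : Fin 3 → ℝ) (j : Fin 3) :
    wedge (crossR a b) (stdB 3 j) = a j • EE b + (-(b j)) • EE a := by
  funext i k
  rw [Matrix.add_apply, Matrix.smul_apply, Matrix.smul_apply]
  fin_cases j <;> fin_cases i <;> fin_cases k <;>
    simp [wedge, crossR, EE, stdB, Matrix.smul_apply, Pi.smul_apply, smul_eq_mul] <;> ring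

lemma ric_cross (hR : IsSymmBilin R) (a b : Fin 3 → ℝ) :
    Ric R (crossR a b) =
      gR a a * R (EE b) (EE b) - 2 * gR a b * R (EE a) (EE b)
        + gR b b * R (EE a) (EE a) := by
  have h : ∀ j, R (wedge (crossR a b) (stdB 3 j)) (wedge (crossR a b) (stdB 3 j))
      = (a j)^2 * R (EE b) (EE b) + 2*(a j)*(-(b j))* R (EE b) (EE a)
        + (b j)^2 * R (EE a) (EE a) := by
    intro j
    rw [wedge_cross_stdB, expand_quad hR]
    ring
  simp only [Ric, h, Fin.sum_univ_three, gR, hR.symm (EE b) (EE a)]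
  ring

lemma ric_smul (hR : IsSymmBilin R) (c : ℝ) (u : Fin 3 → ℝ) :
    Ric R (c • u) = c^2 * Ric R u := by
  have h : ∀ j, wedge (c • u) (stdB 3 j) = c • wedge u (stdB 3 j) := by
    intro j; funext i k
    simp [wedge, Matrix.smul_apply, Pi.smul_apply, smul_eq_mul]
    ring
  simp only [Ric, h, hR.smul_left, smul_right' hR, Finset.mul_sum]
  ring_nf

lemma RC_conj (hR : IsSymmBilin R) (ω : Matrix (Fin 3) (Fin 3) ℂ) :
    RC R ω (matConj ω)
      = ((R (matRe ω) (matRe ω) + R (matIm ω) (matIm ω) : ℝ) : ℂ) := by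
  have h1 : matRe (matConj ω) = matRe ω := by funext i j; simp [matRe, matConj]
  have h2 : matIm (matConj ω) = (-1 : ℝ) • matIm ω := by
    funext i j; simp [matIm, matConj, Matrix.smul_apply]
  rw [RC, h1, h2, smul_right' hR, smul_right' hR, hR.symm (matIm ω) (matRe ω)]
  push_cast
  ring

lemma matRe_EEC (z : Fin 3 → ℂ) : matRe (EEC z) = EE (fun i => (z i).re) := by
  funext i j; fin_cases i <;> fin_cases j <;> simp [matRe, EEC, EE]

lemma matIm_EEC (z : Fin 3 → ℂ) : matIm (EEC z) = EE (fun i => (z i).im) := by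
  funext i j; fin_cases i <;> fin_cases j <;> simp [matIm, EEC, EE]

lemma gC_self (c : Fin 3 → ℂ) :
    gC c c = ((gR (fun i => (c i).re) (fun i => (c i).re)
        - gR (fun i => (c i).im) (fun i => (c i).im) : ℝ) : ℂ)
      + 2 * (gR (fun i => (c i).re) (fun i => (c i).im) : ℝ) * Complex.I := by
  rw [Complex.ext_iff]
  constructor <;>
    simp [gC, gR, Fin.sum_univ_three, Complex.mul_re, Complex.mul_im] <;> ring

lemma exists_frame (u : Fin 3 → ℝ) (hu : u ≠ 0) :
    ∃ (a b : Fin 3 → ℝ) (m c : ℝ), 0 < m ∧ c ≠ 0 ∧ gR a b = 0 ∧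
      gR a a = m ∧ gR b b = m ∧ crossR a b = c • u := by
  by_cases h01 : u 0 = 0 ∧ u 1 = 0
  · have h2 : u 2 ≠ 0 := by
      intro h2; apply hu; funext i; fin_cases i <;> simp [h01.1, h01.2, h2]
    refine ⟨![u 2, 0, 0], ![0, u 2, 0], (u 2)^2, u 2, by positivity, h2, ?_, ?_, ?_, ?_⟩
    · simp [gR, Fin.sum_univ_three]
    · simp [gR, Fin.sum_univ_three]; ring
    · simp [gR, Fin.sum_univ_three]; ring
    · funext i; fin_cases i <;> simp [crossR, h01.1, h01.2, Pi.smul_apply] <;> ring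
  · have hq : 0 < u 0^2 + u 1^2 := by
      rcases not_and_or.mp h01 with h|h <;> positivity
    have hn2' : (0:ℝ) ≤ u 0^2 + u 1^2 + u 2^2 := by positivity
    set n := Real.sqrt (u 0^2 + u 1^2 + u 2^2) with hn_def
    have hn2 : n^2 = u 0^2 + u 1^2 + u 2^2 := Real.sq_sqrt hn2'
    have hn : 0 < n := Real.sqrt_pos.mpr (by positivity)
    have hn0 : n ≠ 0 := ne_of_gt hn
    refine ⟨![-u 1, u 0, 0], ![-(u 0*u 2)/n, -(u 1*u 2)/n, (u 0^2+u 1^2)/n],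
      u 0^2 + u 1^2, (u 0^2+u 1^2)/n, hq, by positivity, ?_, ?_, ?_, ?_⟩
    · simp [gR, Fin.sum_univ_three]; field_simp; ring
    · simp [gR, Fin.sum_univ_three]; ring
    · simp [gR, Fin.sum_univ_three]; field_simp; linear_combination (-1 : ℝ) * hn2
    · funext i; fin_cases i <;> simp [crossR, Pi.smul_apply] <;> field_simp <;> ring

lemma cross_vw (a b : Fin 3 → ℝ) (m : ℝ) (hm : m ≠ 0)
    (hab : gR a b = 0) (haa : gR a a = m) (hbb : gR b b = m) :
    crossC (fun i => ((crossR a b i / m : ℝ) : ℂ))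
        (fun i => (-(b i) : ℂ) + (a i : ℂ) * Complex.I)
      = fun i => ((a i : ℂ) + (b i : ℂ) * Complex.I) := by
  have habR : a 0 * b 0 + a 1 * b 1 + a 2 * b 2 = 0 := by
    simpa [gR, Fin.sum_univ_three] using hab
  have haaR : a 0 * a 0 + a 1 * a 1 + a 2 * a 2 = m := by
    simpa [gR, Fin.sum_univ_three] using haa
  have hbbR : b 0 * b 0 + b 1 * b 1 + b 2 * b 2 = m := by
    simpa [gR, Fin.sum_univ_three] using hbb
  have habC : (a 0 : ℂ) * b 0 + a 1 * b 1 + a 2 * b 2 = 0 := by exact_mod_cast habR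
  have haaC : (a 0 : ℂ) * a 0 + a 1 * a 1 + a 2 * a 2 = m := by exact_mod_cast haaR
  have hbbC : (b 0 : ℂ) * b 0 + b 1 * b 1 + b 2 * b 2 = m := by exact_mod_cast hbbR
  have hmC : (m : ℂ) ≠ 0 := by exact_mod_cast hm
  funext i
  fin_cases i
  · show _ = ((a 0 : ℂ) + (b 0 : ℂ) * Complex.I)
    simp only [crossC, crossR]
    push_cast
    field_simp
    linear_combination (a 0) * hbbC - (b 0) * habC + Complex.I * ((b 0) * haaC - (a 0) * habC)
  · show _ = ((a 1 : ℂ) + (b 1 : ℂ) * Complex.I)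
    simp only [crossC, crossR]
    push_cast
    field_simp
    linear_combination (a 1) * hbbC - (b 1) * habC + Complex.I * ((b 1) * haaC - (a 1) * habC)
  · show _ = ((a 2 : ℂ) + (b 2 : ℂ) * Complex.I)
    simp only [crossC, crossR]
    push_cast
    field_simp
    linear_combination (a 2) * hbbC - (b 2) * habC + Complex.I * ((b 2) * haaC - (a 2) * habC)

lemma gR_self_nonneg (x : Fin 3 → ℝ) : 0 ≤ gR x x :=
  Finset.sum_nonneg fun i _ => mul_self_nonneg (x i)

lemma gR_eq_zero (x : Fin 3 → ℝ) (h : gR x x = 0) : x = 0 := by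
  simp [gR, Fin.sum_univ_three] at h
  funext i
  have h0 : x 0 = 0 := by nlinarith [mul_self_nonneg (x 0), mul_self_nonneg (x 1), mul_self_nonneg (x 2)]
  have h1 : x 1 = 0 := by nlinarith [mul_self_nonneg (x 0), mul_self_nonneg (x 1), mul_self_nonneg (x 2)]
  have h2 : x 2 = 0 := by nlinarith [mul_self_nonneg (x 0), mul_self_nonneg (x 1), mul_self_nonneg (x 2)]
  fin_cases i <;> simpa using ‹_›

lemma EE_eq_zero (x : Fin 3 → ℝ) (h : EE x = 0) : x = 0 := by
  funext i
  fin_cases i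
  · simpa [EE] using congrFun (congrFun h 1) 2
  · simpa [EE] using congrFun (congrFun h 2) 0
  · simpa [EE] using congrFun (congrFun h 0) 1


theorem stmt_19 (R : CurvOp 3) (hR : IsSymmBilin R) :
    (∀ ω : Matrix (Fin 3) (Fin 3) ℂ, IsSimple ω → IC ω ω = 0 →
        0 ≤ RC R ω (matConj ω)) ↔
      ∀ u : Fin 3 → ℝ, 0 ≤ Ric R u := by
  constructor
  · intro hPIC u
    by_cases hu : u = 0
    · subst hu
      have hw : ∀ j, wedge (0 : Fin 3 → ℝ) (stdB 3 j) = 0 := by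
        intro j; funext i k; simp [wedge]
      simp [Ric, hw, zero_left' hR]
    · obtain ⟨a, b, m, c, hm, hc, hab, haa, hbb, hcross⟩ := exists_frame u hu
      set v : Fin 3 → ℂ := fun i => ((crossR a b i / m : ℝ) : ℂ) with hv
      set w : Fin 3 → ℂ := fun i => (-(b i) : ℂ) + (a i : ℂ) * Complex.I with hw
      have hvw : crossC v w = fun i => ((a i : ℂ) + (b i : ℂ) * Complex.I) :=
        cross_vw a b m (ne_of_gt hm) hab haa hbb
      have hEEC : wedge v w = EEC (fun i => ((a i : ℂ) + (b i : ℂ) * Complex.I)) := by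
        rw [wedge_eq_EEC, hvw]
      have hre : matRe (wedge v w) = EE a := by
        rw [hEEC, matRe_EEC]; congr 1; funext i; simp
      have him : matIm (wedge v w) = EE b := by
        rw [hEEC, matIm_EEC]; congr 1; funext i; simp
      have hiso : IC (wedge v w) (wedge v w) = 0 := by
        rw [IC_wedge, hvw, gC_self]
        have e1 : (fun i => (((a i : ℂ) + (b i : ℂ) * Complex.I)).re) = a := by
          funext i; simp
        have e2 : (fun i => (((a i : ℂ) + (b i : ℂ) * Complex.I)).im) = b := by
          funext i; simp
        rw [e1, e2, haa, hbb, hab]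
        simp
      have hne : wedge v w ≠ 0 := by
        intro h0
        have hEa : EE a = 0 := by
          rw [← hre, h0]; funext i j; simp [matRe]
        have ha0 : a = 0 := EE_eq_zero a hEa
        rw [ha0] at haa
        simp [gR] at haa
        exact absurd haa.symm (ne_of_gt hm)
      have hkey := hPIC (wedge v w) ⟨hne, v, w, rfl⟩ hiso
      rw [RC_conj hR, hre, him] at hkey
      have hineq : 0 ≤ R (EE a) (EE a) + R (EE b) (EE b) :=
        Complex.zero_le_real.mp hkey
      have hric : Ric R (crossR a b) = m * (R (EE b) (EE b) + R (EE a) (EE a)) := by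
        rw [ric_cross hR, hab, haa, hbb]; ring
      rw [hcross, ric_smul hR] at hric
      have hc2 : 0 < c ^ 2 := by positivity
      nlinarith [hineq, hm, hric]
  · intro hRic ω hsimp hiso
    obtain ⟨hne, v, w, rfl⟩ := hsimp
    set a : Fin 3 → ℝ := fun i => (crossC v w i).re with ha
    set b : Fin 3 → ℝ := fun i => (crossC v w i).im with hb
    have hgc : gC (crossC v w) (crossC v w) = 0 := by rw [← IC_wedge]; exact hiso
    rw [gC_self] at hgc
    have h1 : gR a a = gR b b := by
      have := congrArg Complex.re hgc
      simp [Complex.add_re, Complex.mul_re, Complex.mul_im] at this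
      linarith
    have h2 : gR a b = 0 := by
      have := congrArg Complex.im hgc
      simp [Complex.add_im, Complex.mul_re, Complex.mul_im] at this
      linarith
    have hre : matRe (wedge v w) = EE a := by rw [wedge_eq_EEC, matRe_EEC]
    have him : matIm (wedge v w) = EE b := by rw [wedge_eq_EEC, matIm_EEC]
    have hm : 0 < gR a a := by
      rcases (gR_self_nonneg a).lt_or_eq with h | h
      · exact h
      · exfalso
        have ha0 : a = 0 := gR_eq_zero a h.symm
        have hb0 : b = 0 := gR_eq_zero b (by rw [← h1, ← h]; )
        apply hne
        have hc0 : crossC v w = 0 := by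
          funext i
          have e1 : (crossC v w i).re = 0 := by simpa using congrFun ha0 i
          have e2 : (crossC v w i).im = 0 := by simpa using congrFun hb0 i
          exact Complex.ext e1 e2
        rw [wedge_eq_EEC, hc0]
        funext i j
        fin_cases i <;> fin_cases j <;> simp [EEC, Matrix.vecHead, Matrix.vecTail]
    have key := hRic (crossR a b)
    rw [ric_cross hR, h2, ← h1] at key
    rw [RC_conj hR, hre, him]
    apply Complex.zero_le_real.mpr
    nlinarith [key, hm]
end
end
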